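/- Let T be a finite abelian group and let β : T × T → ℂˣ be a ℂ-valued alternating bicharacter (multiplicative in each variable with β(u,u)=1) whose radical rad(β) := {t ∈ T ∣ β(u,t)=1 for all u ∈ T} is trivial. Then for every u ∈ T: u ∈ T^{[2]} (i.e., u is a square in T) if and only if β(u,v) = 1 for all v ∈ T_{[2]} (i.e., for all v ∈ T with v² = e). -/

import Mathlib

/-- A ℂ-valued alternating bicharacter on a (multiplicative) finite abelian group. -/
def IsAltBicharC {T : Type*} [CommGroup T] (β : T → T → ℂˣ) : Prop :=
  (∀ u v w : T, β (u * v) w = β u w * β v w) ∧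
  (∀ u v w : T, β u (v * w) = β u v * β u w) ∧
  (∀ u : T, β u u = 1)

private lemma dualEquivAux (G : Type*) [CommGroup G] [Finite G] :
    Nonempty ((G →* ℂˣ) ≃* G) := by
  haveI : NeZero (Monoid.exponent G) := ⟨Monoid.exponent_ne_zero_of_finite⟩
  exact CommGroup.monoidHom_mulEquiv_of_hasEnoughRootsOfUnity G ℂ

private lemma dualFinite (G : Type*) [CommGroup G] [Finite G] :
    Finite (G →* ℂˣ) :=
  Finite.of_equiv G (dualEquivAux G).some.symm.toEquiv

private lemma dualCard (G : Type*) [CommGroup G] [Finite G] :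
    Nat.card (G →* ℂˣ) = Nat.card G :=
  Nat.card_congr (dualEquivAux G).some.toEquiv

/-- Let `β` be a ℂ-valued alternating bicharacter with trivial radical on a finite
abelian group `T`.  Then `u ∈ T` is a square iff `β(u,v) = 1` for every `v ∈ T` with
`v² = e`. -/
theorem stmt15 {T : Type*} [CommGroup T] [Fintype T]
    (β : T → T → ℂˣ) (hβ : IsAltBicharC β)
    (hrad : ∀ t : T, (∀ u : T, β u t = 1) → t = 1) (u : T) :
    (∃ w : T, w ^ 2 = u) ↔ (∀ v : T, v ^ 2 = 1 → β u v = 1) := by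
  obtain ⟨hmul1, hmul2, halt⟩ := hβ
  have hone2 : ∀ a : T, β a 1 = 1 := by
    intro a
    have h := hmul2 a 1 1
    rw [one_mul] at h
    exact (left_eq_mul.mp h)
  have hone1 : ∀ a : T, β 1 a = 1 := by
    intro a
    have h := hmul1 1 1 a
    rw [one_mul] at h
    exact (left_eq_mul.mp h)
  have hskew : ∀ a b : T, β a b * β b a = 1 := by
    intro a b
    have h := halt (a * b)
    rw [hmul1 a b (a * b), hmul2 a a b, hmul2 b a b, halt a, halt b, one_mul, mul_one] at h
    exact h
  -- square implies pairs trivially with 2-torsion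
  have hsq : ∀ w v : T, v ^ 2 = 1 → β (w ^ 2) v = 1 := by
    intro w v hv
    have h1 : β (w ^ 2) v = β w v * β w v := by
      rw [pow_two, hmul1]
    have h2 : β w v * β w v = β w (v * v) := (hmul2 w v v).symm
    rw [h1, h2, ← pow_two, hv, hone2]
  constructor
  · rintro ⟨w, rfl⟩ v hv
    exact hsq w v hv
  · -- counting argument
    intro hu
    classical
    set sq : T →* T := powMonoidHom 2 with hsqdef
    set K : Subgroup T := sq.ker with hK
    set S : Subgroup T := sq.range with hS
    -- the character map
    let χm : T →* (T →* ℂˣ) :=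
      { toFun := fun a =>
          { toFun := β a
            map_one' := hone2 a
            map_mul' := fun v w => hmul2 a v w }
        map_one' := by ext v; exact congrArg Units.val (hone1 v)
        map_mul' := fun a b => by ext v; exact congrArg Units.val (hmul1 a b v) }
    have hχapp : ∀ a v : T, χm a v = β a v := fun a v => rfl
    have hχinj : Function.Injective χm := by
      rw [injective_iff_map_eq_one]
      intro a ha
      apply hrad
      intro v
      have h1 : β a v = 1 := by
        have := DFunLike.congr_fun ha v
        simpa [hχapp] using this
      have := hskew a v
      rw [h1, one_mul] at this
      exact this
    haveI : Finite (T →* ℂˣ) := dualFinite T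
    haveI : Finite (↥K →* ℂˣ) := dualFinite ↥K
    haveI : Finite ((T ⧸ K) →* ℂˣ) := dualFinite (T ⧸ K)
    have hχbij : Function.Bijective χm :=
      (Nat.bijective_iff_injective_and_card χm).mpr ⟨hχinj, (dualCard T).symm⟩
    -- restriction to K
    let res : (T →* ℂˣ) →* (↥K →* ℂˣ) :=
      { toFun := fun φ => φ.comp K.subtype
        map_one' := by ext v; simp
        map_mul' := fun a b => by ext v; simp }
    let F : T →* (↥K →* ℂˣ) := res.comp χm
    have hFapp : ∀ (a : T) (v : ↥K), F a v = β a (v : T) := fun a v => rfl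
    have hmemK : ∀ v : T, v ∈ K ↔ v ^ 2 = 1 := by
      intro v
      rw [hK, MonoidHom.mem_ker, hsqdef, powMonoidHom_apply]
    -- u is in the kernel of F
    have huF : u ∈ F.ker := by
      rw [MonoidHom.mem_ker]
      ext v
      rw [hFapp]
      exact congrArg Units.val (hu (v : T) ((hmemK v).mp v.2))
    -- squares are in the kernel of F
    have hSF : S ≤ F.ker := by
      rintro x ⟨w, rfl⟩
      rw [MonoidHom.mem_ker]
      ext v
      rw [hFapp]
      exact congrArg Units.val (hsq w (v : T) ((hmemK v).mp v.2))
    -- cardinality bookkeeping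
    have c1 : Nat.card T = Nat.card F.range * Nat.card F.ker := by
      rw [Subgroup.card_eq_card_quotient_mul_card_subgroup F.ker]
      congr 1
      exact Nat.card_congr (QuotientGroup.quotientKerEquivRange F).toEquiv
    have c2 : Nat.card T = Nat.card S * Nat.card K := by
      rw [Subgroup.card_eq_card_quotient_mul_card_subgroup K]
      congr 1
      exact Nat.card_congr (QuotientGroup.quotientKerEquivRange sq).toEquiv
    have c3 : Nat.card (T →* ℂˣ) = Nat.card res.range * Nat.card res.ker := by
      rw [Subgroup.card_eq_card_quotient_mul_card_subgroup res.ker]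
      congr 1
      exact Nat.card_congr (QuotientGroup.quotientKerEquivRange res).toEquiv
    have c5 : Nat.card T = Nat.card (T ⧸ K) * Nat.card K :=
      Subgroup.card_eq_card_quotient_mul_card_subgroup K
    -- the kernel of res injects into the dual of T ⧸ K
    have c4 : Nat.card res.ker ≤ Nat.card (T ⧸ K) := by
      have hker1 : ∀ φ : res.ker, ∀ v ∈ K, (φ : T →* ℂˣ) v = 1 := by
        rintro ⟨φ, hφ⟩ v hv
        have := DFunLike.congr_fun (MonoidHom.mem_ker.mp hφ) (⟨v, hv⟩ : ↥K)
        exact this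
      let g : res.ker → ((T ⧸ K) →* ℂˣ) := fun φ =>
        QuotientGroup.lift K (φ : T →* ℂˣ) (hker1 φ)
      have hginj : Function.Injective g := by
        intro φ ψ h
        ext v
        have h1 : g φ ((v : T) : T ⧸ K) = g ψ ((v : T) : T ⧸ K) := by rw [h]
        exact congrArg Units.val h1
      calc Nat.card res.ker ≤ Nat.card ((T ⧸ K) →* ℂˣ) :=
            Nat.card_le_card_of_injective g hginj
        _ = Nat.card (T ⧸ K) := dualCard (T ⧸ K)
    -- F.range = res.range since χm is surjective
    have hrange : F.range = res.range := by
      ext y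
      constructor
      · rintro ⟨x, rfl⟩
        exact ⟨χm x, rfl⟩
      · rintro ⟨z, rfl⟩
        obtain ⟨x, rfl⟩ := hχbij.2 z
        exact ⟨x, rfl⟩
    -- positivity
    have hKpos : 0 < Nat.card K := Nat.card_pos
    have hQpos : 0 < Nat.card (T ⧸ K) := Nat.card_pos
    -- |res.range| ≥ |K|
    have hres_ge : Nat.card K ≤ Nat.card res.range := by
      have h1 : Nat.card res.range * Nat.card res.ker = Nat.card (T ⧸ K) * Nat.card K := by
        rw [← c3, dualCard T, c5]
      by_contra hlt
      push_neg at hlt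
      have h2 : Nat.card res.range * Nat.card res.ker <
          Nat.card (T ⧸ K) * Nat.card K := by
        calc Nat.card res.range * Nat.card res.ker
            ≤ Nat.card res.range * Nat.card (T ⧸ K) :=
              Nat.mul_le_mul_left _ c4
          _ < Nat.card K * Nat.card (T ⧸ K) :=
              (Nat.mul_lt_mul_right hQpos).mpr hlt
          _ = Nat.card (T ⧸ K) * Nat.card K := Nat.mul_comm _ _
      exact absurd h1 (Nat.ne_of_lt h2)
    -- |F.ker| ≤ |S|
    have hker_le : Nat.card F.ker ≤ Nat.card S := by
      have h1 : Nat.card F.range * Nat.card F.ker = Nat.card S * Nat.card K := by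
        rw [← c1, c2]
      have h2 : Nat.card K ≤ Nat.card F.range := by rw [hrange]; exact hres_ge
      have h3 : Nat.card K * Nat.card F.ker ≤ Nat.card K * Nat.card S := by
        calc Nat.card K * Nat.card F.ker
            ≤ Nat.card F.range * Nat.card F.ker := Nat.mul_le_mul_right _ h2
          _ = Nat.card S * Nat.card K := h1
          _ = Nat.card K * Nat.card S := Nat.mul_comm _ _
      exact Nat.le_of_mul_le_mul_left h3 hKpos
    have hEq : S = F.ker := Subgroup.eq_of_le_of_card_ge hSF hker_le
    have : u ∈ S := by rw [hEq]; exact huF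
    obtain ⟨w, hw⟩ := this
    exact ⟨w, by rwa [hsqdef, powMonoidHom_apply] at hw⟩
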